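/- Let n : {0,…,d} → ℕ be such that n(j) = 0 for at least one j, and define μ : {0,…,d} → ℤ by μ = Σ_{k=0}^d n(k)·α_k, i.e. μ(k) = n((k−1) mod (d+1)) − n(k) for all k. If (m_{ij}) is a family of nonnegative integers indexed by the ordered pairs (i,j) with i ≠ j and i, j ∈ {0,…,d}, such that μ = Σ_{i≠j} m_{ij}(ε_i − ε_j), then Σ_{i<j} m_{ij} ≥ n(d). -/
import Mathlib

set_option maxHeartbeats 1000000


/-- If μ = Σ_k n(k)·α_k with n(k) ≥ 0 and some n(j) = 0 (so that
μ(k) = n((k−1) mod (d+1)) − n(k)), then any expression μ = Σ_{i≠j} m_{ij}(ε_i − ε_j)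
with nonnegative integers m_{ij} satisfies Σ_{i<j} m_{ij} ≥ n(d) = ℓ(μ). -/
theorem stmt_17 (d : ℕ) (hd : 1 ≤ d) (n : Fin (d+1) → ℕ)
    (hn : ∃ j, n j = 0)
    (μ : Fin (d+1) → ℤ)
    (hμ : ∀ k : Fin (d+1), μ k = (n (k - 1) : ℤ) - (n k : ℤ))
    (m : Fin (d+1) → Fin (d+1) → ℕ)
    (hm : ∀ k, μ k = (∑ j ∈ Finset.univ.filter (fun j => j ≠ k), (m k j : ℤ)) -
        ∑ i ∈ Finset.univ.filter (fun i => i ≠ k), (m i k : ℤ)) :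
    n (Fin.last d) ≤ ∑ i : Fin (d+1), ∑ j ∈ Finset.univ.filter (fun j => i < j), m i j := by
  classical
  obtain ⟨j0, hj0⟩ := hn
  have hj0d : (j0 : ℕ) ≤ d := Nat.lt_succ_iff.mp j0.isLt
  set T : Finset (Fin (d+1)) := Finset.univ.filter (fun k => j0 < k) with hT
  have hgb : ∀ i : ℕ, min ((j0 : ℕ) + i) d < d + 1 := fun i => by omega
  -- the auxiliary function for telescoping
  have key : (n (Fin.last d) : ℤ) = ∑ k ∈ T, (-μ k) := by
    have tel := Finset.sum_range_sub (fun i => (n ⟨min ((j0 : ℕ) + i) d, hgb i⟩ : ℤ)) (d - (j0 : ℕ))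
    have hglast : (⟨min ((j0 : ℕ) + (d - (j0 : ℕ))) d, hgb _⟩ : Fin (d+1)) = Fin.last d := by
      apply Fin.ext; simp [Fin.val_last]; omega
    have hg0 : (⟨min ((j0 : ℕ) + 0) d, hgb 0⟩ : Fin (d+1)) = j0 := by
      apply Fin.ext; simp; omega
    rw [hglast, hg0, hj0] at tel
    simp only [Nat.cast_zero, sub_zero] at tel
    rw [← tel]
    refine Finset.sum_nbij' (fun i => (⟨min ((j0 : ℕ) + i + 1) d, by omega⟩ : Fin (d+1)))
      (fun k => (k : ℕ) - (j0 : ℕ) - 1) ?_ ?_ ?_ ?_ ?_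
    · intro a ha
      rw [Finset.mem_range] at ha
      simp only [hT, Finset.mem_filter, Finset.mem_univ, true_and, Fin.lt_def]
      omega
    · intro k hk
      simp only [hT, Finset.mem_filter, Finset.mem_univ, true_and, Fin.lt_def] at hk
      have := k.isLt
      show (k : ℕ) - (j0 : ℕ) - 1 ∈ Finset.range (d - (j0 : ℕ))
      rw [Finset.mem_range]
      omega
    · intro a ha
      rw [Finset.mem_range] at ha
      show min ((j0 : ℕ) + a + 1) d - (j0 : ℕ) - 1 = a
      omega
    · intro k hk
      simp only [hT, Finset.mem_filter, Finset.mem_univ, true_and, Fin.lt_def] at hk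
      have := k.isLt
      apply Fin.ext
      show min ((j0 : ℕ) + ((k : ℕ) - (j0 : ℕ) - 1) + 1) d = (k : ℕ)
      omega
    · intro a ha
      rw [Finset.mem_range] at ha
      have hke : (⟨min ((j0 : ℕ) + a + 1) d, by omega⟩ : Fin (d+1))
          = ⟨(j0 : ℕ) + a + 1, by omega⟩ := by
        apply Fin.ext; show min ((j0 : ℕ) + a + 1) d = (j0 : ℕ) + a + 1; omega
      show (n ⟨min ((j0 : ℕ) + (a+1)) d, hgb (a+1)⟩ : ℤ) - (n ⟨min ((j0 : ℕ) + a) d, hgb a⟩ : ℤ)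
          = -μ ⟨min ((j0 : ℕ) + a + 1) d, by omega⟩
      rw [hke, hμ ⟨(j0 : ℕ) + a + 1, by omega⟩, neg_sub]
      have hsub : ((⟨(j0 : ℕ) + a + 1, by omega⟩ - 1 : Fin (d+1)) : ℕ) = (j0 : ℕ) + a := by
        rw [Fin.sub_def]
        have h1 : ((1 : Fin (d+1)) : ℕ) = 1 := by
          rw [Fin.val_one']; exact Nat.mod_eq_of_lt (by omega)
        show (d + 1 - ((1 : Fin (d+1)) : ℕ) + ((j0 : ℕ) + a + 1)) % (d + 1) = (j0 : ℕ) + a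
        rw [h1]
        have h2 : d + 1 - 1 + ((j0 : ℕ) + a + 1) = ((j0 : ℕ) + a) + (d + 1) := by omega
        rw [h2, Nat.add_mod_right, Nat.mod_eq_of_lt (by omega)]
      have e1 : (⟨(j0 : ℕ) + a + 1, by omega⟩ - 1 : Fin (d+1))
          = (⟨min ((j0 : ℕ) + a) d, hgb a⟩ : Fin (d+1)) := by
        apply Fin.ext; rw [hsub]; show (j0 : ℕ) + a = min ((j0 : ℕ) + a) d; omega
      have e2 : (⟨(j0 : ℕ) + a + 1, by omega⟩ : Fin (d+1))
          = (⟨min ((j0 : ℕ) + (a + 1)) d, hgb (a+1)⟩ : Fin (d+1)) := by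
        apply Fin.ext; show (j0 : ℕ) + a + 1 = min ((j0 : ℕ) + (a + 1)) d; omega
      rw [e1, e2]
  -- Step 2: flow computation
  have hflow : ∑ k ∈ T, (-μ k) ≤ ∑ i : Fin (d+1), ∑ j ∈ Finset.univ.filter (fun j => i < j), (m i j : ℤ) := by
    have hTmem : ∀ k : Fin (d+1), k ∈ T ↔ j0 < k := by
      intro k; simp [hT]
    -- split incoming sum
    have hsplitIn : ∀ k ∈ T,
        (∑ i ∈ Finset.univ.filter (fun i => i ≠ k), (m i k : ℤ))
          = (∑ i ∈ T.filter (fun i => i ≠ k), (m i k : ℤ))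
            + ∑ i ∈ Finset.univ.filter (fun i => ¬ j0 < i), (m i k : ℤ) := by
      intro k hk
      rw [hTmem] at hk
      rw [← Finset.sum_filter_add_sum_filter_not (Finset.univ.filter (fun i => i ≠ k))
        (fun i => j0 < i)]
      congr 1
      · apply Finset.sum_congr _ (fun _ _ => rfl)
        rw [hT, Finset.filter_filter, Finset.filter_filter]
        apply Finset.filter_congr
        intro x _; simp; tauto
      · apply Finset.sum_congr _ (fun _ _ => rfl)
        rw [Finset.filter_filter]
        ext i
        simp only [Finset.mem_filter, Finset.mem_univ, true_and]
        constructor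
        · tauto
        · intro h
          exact ⟨fun he => h (by rw [he]; exact hk), h⟩
    -- split outgoing sum (as inequality)
    have hsplitOut : ∀ k ∈ T,
        (∑ j ∈ T.filter (fun j => j ≠ k), (m k j : ℤ))
          ≤ ∑ j ∈ Finset.univ.filter (fun j => j ≠ k), (m k j : ℤ) := by
      intro k _
      apply Finset.sum_le_sum_of_subset_of_nonneg
      · intro x hx
        simp only [hT, Finset.mem_filter, Finset.mem_univ, true_and] at hx ⊢
        exact hx.2
      · intro i _ _; positivity
    -- cancellation of internal edges
    have hcancel : (∑ k ∈ T, ∑ i ∈ T.filter (fun i => i ≠ k), (m i k : ℤ))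
        = ∑ k ∈ T, ∑ j ∈ T.filter (fun j => j ≠ k), (m k j : ℤ) := by
      simp only [Finset.sum_filter]
      rw [Finset.sum_comm]
      apply Finset.sum_congr rfl; intro x _
      apply Finset.sum_congr rfl; intro y _
      by_cases h : x = y
      · simp [h]
      · simp [h, Ne.symm h]
    -- the crossing edges bound
    have hcross : (∑ k ∈ T, ∑ i ∈ Finset.univ.filter (fun i => ¬ j0 < i), (m i k : ℤ))
        ≤ ∑ i : Fin (d+1), ∑ j ∈ Finset.univ.filter (fun j => i < j), (m i j : ℤ) := by
      rw [Finset.sum_comm]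
      have step1 : ∀ i ∈ Finset.univ.filter (fun i : Fin (d+1) => ¬ j0 < i),
          (∑ k ∈ T, (m i k : ℤ)) ≤ ∑ j ∈ Finset.univ.filter (fun j => i < j), (m i j : ℤ) := by
        intro i hi
        simp only [Finset.mem_filter, Finset.mem_univ, true_and] at hi
        apply Finset.sum_le_sum_of_subset_of_nonneg
        · intro k hk
          rw [hTmem] at hk
          simp only [Finset.mem_filter, Finset.mem_univ, true_and]
          exact lt_of_le_of_lt (not_lt.mp hi) hk
        · intro _ _ _; positivity
      calc (∑ i ∈ Finset.univ.filter (fun i : Fin (d+1) => ¬ j0 < i), ∑ k ∈ T, (m i k : ℤ))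
          ≤ ∑ i ∈ Finset.univ.filter (fun i : Fin (d+1) => ¬ j0 < i),
              ∑ j ∈ Finset.univ.filter (fun j => i < j), (m i j : ℤ) :=
            Finset.sum_le_sum step1
        _ ≤ ∑ i : Fin (d+1), ∑ j ∈ Finset.univ.filter (fun j => i < j), (m i j : ℤ) := by
            apply Finset.sum_le_sum_of_subset_of_nonneg (Finset.filter_subset _ _)
            intro i _ _
            apply Finset.sum_nonneg
            intro _ _; positivity
    -- put it all together
    have hexp : ∑ k ∈ T, (-μ k)
        = (∑ k ∈ T, ∑ i ∈ T.filter (fun i => i ≠ k), (m i k : ℤ))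
          + (∑ k ∈ T, ∑ i ∈ Finset.univ.filter (fun i => ¬ j0 < i), (m i k : ℤ))
          - ∑ k ∈ T, ∑ j ∈ Finset.univ.filter (fun j => j ≠ k), (m k j : ℤ) := by
      rw [← Finset.sum_add_distrib, ← Finset.sum_sub_distrib]
      apply Finset.sum_congr rfl
      intro k hk
      rw [hm k, ← hsplitIn k hk]
      ring
    rw [hexp, hcancel]
    have : (∑ k ∈ T, ∑ j ∈ T.filter (fun j => j ≠ k), (m k j : ℤ))
        ≤ ∑ k ∈ T, ∑ j ∈ Finset.univ.filter (fun j => j ≠ k), (m k j : ℤ) :=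
      Finset.sum_le_sum hsplitOut
    calc _ ≤ (∑ k ∈ T, ∑ i ∈ Finset.univ.filter (fun i => ¬ j0 < i), (m i k : ℤ)) := by omega
      _ ≤ _ := hcross
  have final : (n (Fin.last d) : ℤ) ≤ ∑ i : Fin (d+1), ∑ j ∈ Finset.univ.filter (fun j => i < j), (m i j : ℤ) :=
    key ▸ hflow
  exact_mod_cast final
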